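/- Let 𝔰 = span{x, h, y} ⊆ sl(k+1,ℝ) with x = Σ_{i=1}^k E_{i+1,i}, h = diag(k, k-2, …, -k), y = Σ_{i=1}^k i(k+1-i) E_{i,i+1}, let B be the Killing form of sl(k+1,ℝ), 𝔰^⊥ its B-orthogonal complement, and 𝔭 = ⊕_{i≥0} 𝔤_i the upper-triangular (including diagonal) part. Then W := {u ∈ 𝔰^⊥ ∩ 𝔭 : ⁅u, y⁆ = 0} = span{y², y³, …, y^k}, the span of the matrix powers of y from the 2nd to the k-th. -/

import Mathlib

attribute [local instance 100] LieRing.ofAssociativeRing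

/-- Matrices supported on the band `b - a = i`. -/
def band (n : ℕ) (i : ℤ) : Submodule ℝ (Matrix (Fin n) (Fin n) ℝ) where
  carrier := {A | ∀ a b : Fin n, ((b : ℤ) - (a : ℤ)) ≠ i → A a b = 0}
  zero_mem' := by intro a b _; rfl
  add_mem' := by
    intro A B hA hB a b hab
    simp [Matrix.add_apply, hA a b hab, hB a b hab]
  smul_mem' := by
    intro c A hA a b hab
    simp [Matrix.smul_apply, hA a b hab]

/-- The regular nilpotent lower shift `x = Σ_{i=1}^k E_{i+1,i}`. -/
noncomputable def xMat (k : ℕ) : Matrix (Fin (k + 1)) (Fin (k + 1)) ℝ :=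
  ∑ i : Fin k, Matrix.single i.succ i.castSucc 1

/-- `h = diag(k, k-2, k-4, …, -k)`. -/
noncomputable def hMat (k : ℕ) : Matrix (Fin (k + 1)) (Fin (k + 1)) ℝ :=
  Matrix.diagonal fun a : Fin (k + 1) => (k : ℝ) - 2 * (a : ℝ)

/-- `y = Σ_{i=1}^k i (k+1-i) E_{i,i+1}`. -/
noncomputable def yMat (k : ℕ) : Matrix (Fin (k + 1)) (Fin (k + 1)) ℝ :=
  ∑ i : Fin k, (((i : ℝ) + 1) * ((k : ℝ) - (i : ℝ))) • Matrix.single i.castSucc i.succ 1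

/-- The Lie algebra `𝔤 = sl(k+1, ℝ)`. -/
noncomputable def slk (k : ℕ) : LieSubalgebra ℝ (Matrix (Fin (k + 1)) (Fin (k + 1)) ℝ) :=
  LieAlgebra.SpecialLinear.sl (Fin (k + 1)) ℝ

/-- The grading `𝔤_i` of `sl(k+1, ℝ)` by diagonals, as subspaces of `sl(k+1, ℝ)`. -/
noncomputable def slkBand (k : ℕ) (i : ℤ) : Submodule ℝ ↥(slk k) :=
  Submodule.comap (slk k).incl.toLinearMap (band (k + 1) i)

/-- The orthogonal complement `{u : B(u, s) = 0 for all s ∈ S}` of a subspace `S`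
with respect to a bilinear form `B`. -/
def perpOf {K L : Type*} [Field K] [AddCommGroup L] [Module K L]
    (B : LinearMap.BilinForm K L) (S : Submodule K L) : Submodule K L where
  carrier := {u : L | ∀ s ∈ S, B u s = 0}
  zero_mem' := by intro s hs; simp
  add_mem' := by
    intro a b ha hb s hs
    rw [map_add, LinearMap.add_apply, ha s hs, hb s hs, add_zero]
  smul_mem' := by
    intro c a ha s hs
    rw [map_smul, LinearMap.smul_apply, ha s hs, smul_zero]

/-- The subspace `{u : ⁅u, y⁆ = 0}`. -/
def kerRight {K L : Type*} [Field K] [LieRing L] [LieAlgebra K L] (y : L) :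
    Submodule K L where
  carrier := {u : L | ⁅u, y⁆ = 0}
  zero_mem' := by simp
  add_mem' := by intro a b ha hb; rw [Set.mem_setOf_eq, add_lie, ha, hb, add_zero]
  smul_mem' := by intro c a ha; rw [Set.mem_setOf_eq, smul_lie, ha, smul_zero]

namespace Stmt13Aux

noncomputable def cc (k j : ℕ) : ℝ := ((j : ℝ) + 1) * ((k : ℝ) - (j : ℝ))

noncomputable def pr (k m a : ℕ) : ℝ := ∏ j ∈ Finset.range m, cc k (a + j)

lemma cc_pos {k j : ℕ} (h : j < k) : 0 < cc k j := by
  have h1 : (j : ℝ) < (k : ℝ) := by exact_mod_cast h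
  have h2 : (0:ℝ) ≤ (j:ℝ) := by positivity
  unfold cc; nlinarith

lemma pr_pos {k m a : ℕ} (h : a + m ≤ k) : 0 < pr k m a := by
  apply Finset.prod_pos
  intro j hj
  exact cc_pos (by simp at hj; omega)

lemma yMat_apply (k : ℕ) (a b : Fin (k+1)) :
    yMat k a b = if (b:ℕ) = (a:ℕ) + 1 then cc k (a:ℕ) else 0 := by
  unfold yMat
  rw [Matrix.sum_apply]
  by_cases hb : (b:ℕ) = (a:ℕ) + 1
  · have ha : (a:ℕ) < k := by omega
    rw [Finset.sum_eq_single (⟨(a:ℕ), ha⟩ : Fin k)]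
    · simp only [Matrix.smul_apply, Matrix.single, Matrix.of_apply]
      have h1 : (⟨(a:ℕ), ha⟩ : Fin k).castSucc = a := by ext; simp
      have h2 : (⟨(a:ℕ), ha⟩ : Fin k).succ = b := by ext; simp [hb]
      rw [if_pos hb, h1, h2]
      simp [cc]
    · intro i _ hi
      simp only [Matrix.smul_apply, Matrix.single, Matrix.of_apply]
      rw [if_neg, smul_zero]
      rintro ⟨rfl, rfl⟩
      exact hi (by ext; simp)
    · intro h; exact absurd (Finset.mem_univ _) h
  · rw [if_neg hb]
    apply Finset.sum_eq_zero
    intro i _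
    simp only [Matrix.smul_apply, Matrix.single, Matrix.of_apply]
    rw [if_neg, smul_zero]
    rintro ⟨rfl, rfl⟩
    exact hb (by simp)

lemma xMat_apply (k : ℕ) (a b : Fin (k+1)) :
    xMat k a b = if (a:ℕ) = (b:ℕ) + 1 then 1 else 0 := by
  unfold xMat
  rw [Matrix.sum_apply]
  by_cases hb : (a:ℕ) = (b:ℕ) + 1
  · have hbk : (b:ℕ) < k := by omega
    rw [Finset.sum_eq_single (⟨(b:ℕ), hbk⟩ : Fin k)]
    · simp only [Matrix.single, Matrix.of_apply]
      rw [if_pos hb, if_pos]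
      constructor <;> (ext; simp [hb])
    · intro i _ hi
      simp only [Matrix.single, Matrix.of_apply]
      rw [if_neg]
      rintro ⟨rfl, rfl⟩
      exact hi (by ext; simp)
    · intro h; exact absurd (Finset.mem_univ _) h
  · rw [if_neg hb]
    apply Finset.sum_eq_zero
    intro i _
    simp only [Matrix.single, Matrix.of_apply]
    rw [if_neg]
    rintro ⟨rfl, rfl⟩
    exact hb (by simp)

lemma ypow_apply (k m : ℕ) (a b : Fin (k+1)) :
    (yMat k ^ m) a b = if (b:ℕ) = (a:ℕ) + m then pr k m (a:ℕ) else 0 := by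
  induction m generalizing b with
  | zero =>
    simp only [pow_zero, pr, Finset.range_zero, Finset.prod_empty, Nat.add_zero]
    rw [Matrix.one_apply]
    by_cases h : a = b
    · rw [if_pos h, if_pos (by rw [h])]
    · rw [if_neg h, if_neg (by intro hv; exact h (Fin.ext hv.symm))]
  | succ m ih =>
    rw [pow_succ, Matrix.mul_apply]
    by_cases hb : (b:ℕ) = (a:ℕ) + (m+1)
    · have hc : (a:ℕ) + m < k + 1 := by omega
      rw [if_pos hb, Finset.sum_eq_single (⟨(a:ℕ)+m, hc⟩ : Fin (k+1))]
      · rw [ih, yMat_apply]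
        rw [if_pos (by simp), if_pos (by simp only []; omega)]
        simp only [pr]
        rw [Finset.prod_range_succ]
      · intro c _ hc2
        rw [ih]
        rw [if_neg, zero_mul]
        intro hcv
        exact hc2 (by ext; simp [hcv])
      · intro h; exact absurd (Finset.mem_univ _) h
    · rw [if_neg hb]
      apply Finset.sum_eq_zero
      intro c _
      rw [ih, yMat_apply]
      by_cases h1 : (c:ℕ) = (a:ℕ) + m
      · rw [if_pos h1, if_neg (show ¬((b:ℕ) = (c:ℕ) + 1) by omega), mul_zero]
      · rw [if_neg h1, zero_mul]

lemma ypow_trace (k m : ℕ) (hm : 1 ≤ m) : (yMat k ^ m).trace = 0 := by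
  rw [Matrix.trace]
  apply Finset.sum_eq_zero
  intro a _
  rw [Matrix.diag_apply, ypow_apply, if_neg (by omega)]

lemma trace_ypow_mul_x (k m : ℕ) (hm : m ≠ 1) : (yMat k ^ m * xMat k).trace = 0 := by
  rw [Matrix.trace]
  apply Finset.sum_eq_zero
  intro a _
  rw [Matrix.diag_apply, Matrix.mul_apply]
  apply Finset.sum_eq_zero
  intro c _
  rw [ypow_apply, xMat_apply]
  by_cases h1 : (c:ℕ) = (a:ℕ) + m
  · rw [if_pos h1, if_neg (by omega), mul_zero]
  · rw [if_neg h1, zero_mul]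

lemma trace_ypow_mul_h (k m : ℕ) (hm : 1 ≤ m) : (yMat k ^ m * hMat k).trace = 0 := by
  rw [Matrix.trace]
  apply Finset.sum_eq_zero
  intro a _
  rw [Matrix.diag_apply, Matrix.mul_apply]
  apply Finset.sum_eq_zero
  intro c _
  rw [ypow_apply]
  unfold hMat
  rw [Matrix.diagonal_apply]
  by_cases h1 : (c:ℕ) = (a:ℕ) + m
  · rw [if_pos h1, if_neg (by intro h; rw [h] at h1; omega), mul_zero]
  · rw [if_neg h1, zero_mul]

lemma trace_y_mul_x_pos (k : ℕ) (hk : 1 ≤ k) : 0 < (yMat k * xMat k).trace := by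
  rw [Matrix.trace]
  have key : ∀ a c : Fin (k+1), 0 ≤ yMat k a c * xMat k c a := by
    intro a c
    rw [yMat_apply, xMat_apply]
    by_cases h1 : (c:ℕ) = (a:ℕ) + 1
    · rw [if_pos h1, if_pos h1]
      have : (a:ℕ) < k := by omega
      exact le_of_lt (by simpa using cc_pos this)
    · rw [if_neg h1, zero_mul]
  apply Finset.sum_pos'
  · intro a _
    rw [Matrix.diag_apply, Matrix.mul_apply]
    exact Finset.sum_nonneg fun c _ => key a c
  · refine ⟨0, Finset.mem_univ _, ?_⟩
    rw [Matrix.diag_apply, Matrix.mul_apply]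
    apply Finset.sum_pos' (fun c _ => key 0 c)
    refine ⟨⟨1, by omega⟩, Finset.mem_univ _, ?_⟩
    rw [yMat_apply, xMat_apply]
    have h0 : ((0 : Fin (k+1)) : ℕ) = 0 := rfl
    rw [h0]
    norm_num
    exact cc_pos hk

lemma centralizer_zero {k : ℕ} (u : Matrix (Fin (k+1)) (Fin (k+1)) ℝ)
    (hcomm : u * yMat k = yMat k * u) (hrow : ∀ b, u 0 b = 0) : u = 0 := by
  have key : ∀ a : Fin (k+1), ∀ b, u a b = 0 := by
    intro a
    induction a using Fin.induction with
    | zero => exact hrow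
    | succ i ih =>
      intro b
      have h1 : (u * yMat k) i.castSucc b = 0 := by
        rw [Matrix.mul_apply]
        apply Finset.sum_eq_zero
        intro c _
        rw [ih c, zero_mul]
      rw [hcomm] at h1
      rw [Matrix.mul_apply] at h1
      have h2 : ∀ c : Fin (k+1), yMat k i.castSucc c * u c b
          = if c = i.succ then cc k (i:ℕ) * u i.succ b else 0 := by
        intro c
        rw [yMat_apply]
        by_cases hc : c = i.succ
        · rw [if_pos hc, if_pos (by simp [hc]), hc]; rw [Fin.coe_castSucc]
        · rw [if_neg hc, if_neg, zero_mul]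
          intro hv
          exact hc (by ext; simpa using hv)
      rw [Finset.sum_congr rfl (fun c _ => h2 c), Finset.sum_ite_eq' Finset.univ i.succ] at h1
      simp only [Finset.mem_univ, if_pos] at h1
      have hcc : cc k (i:ℕ) ≠ 0 := ne_of_gt (cc_pos i.isLt)
      exact (mul_eq_zero.mp h1).resolve_left hcc
  ext a b
  rw [key a b, Matrix.zero_apply]

lemma centralizer_repr {k : ℕ} (u : Matrix (Fin (k+1)) (Fin (k+1)) ℝ)
    (hcomm : u * yMat k = yMat k * u) :
    u = ∑ m : Fin (k+1), (u 0 m / pr k (m:ℕ) 0) • yMat k ^ (m:ℕ) := by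
  set w := ∑ m : Fin (k+1), (u 0 m / pr k (m:ℕ) 0) • yMat k ^ (m:ℕ) with hw
  have hwcomm : w * yMat k = yMat k * w := by
    rw [hw, Finset.sum_mul, Finset.mul_sum]
    apply Finset.sum_congr rfl
    intro m _
    rw [smul_mul_assoc, mul_smul_comm, ← pow_succ, ← pow_succ']
  have hwrow : ∀ b, w 0 b = u 0 b := by
    intro b
    rw [hw, Matrix.sum_apply]
    have h2 : ∀ m : Fin (k+1), ((u 0 m / pr k (m:ℕ) 0) • yMat k ^ (m:ℕ)) 0 b
        = if m = b then u 0 b else 0 := by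
      intro m
      rw [Matrix.smul_apply, ypow_apply]
      by_cases hm : m = b
      · rw [if_pos hm, if_pos (by simp [hm])]
        have hpr : pr k (b:ℕ) 0 ≠ 0 := ne_of_gt (pr_pos (by omega))
        subst hm
        rw [Fin.val_zero, smul_eq_mul]
        field_simp
      · rw [if_neg hm, if_neg, smul_zero]
        intro hv
        exact hm (by ext; simpa using hv.symm)
    rw [Finset.sum_congr rfl (fun m _ => h2 m), Finset.sum_ite_eq' Finset.univ b]
    simp
  have hz : u - w = 0 := by
    apply centralizer_zero (u - w)
    · rw [sub_mul, mul_sub, hcomm, hwcomm]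
    · intro b
      rw [Matrix.sub_apply, hwrow b, sub_self]
  ext a b
  have := congrFun (congrFun hz a) b
  rw [Matrix.sub_apply, Matrix.zero_apply] at this
  linarith [this]

lemma stdBasis_repr {n : ℕ} (M : Matrix (Fin n) (Fin n) ℝ) (p : Fin n × Fin n) :
    (Matrix.stdBasis ℝ (Fin n) (Fin n)).repr M p = M p.1 p.2 := by
  have hexp : M = ∑ q : Fin n × Fin n, M q.1 q.2 • Matrix.stdBasis ℝ (Fin n) (Fin n) q := by
    rw [Fintype.sum_prod_type]
    conv_lhs => rw [Matrix.matrix_eq_sum_single M]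
    apply Finset.sum_congr rfl
    intro i _
    apply Finset.sum_congr rfl
    intro j _
    rw [Matrix.stdBasis_eq_single, Matrix.smul_single, smul_eq_mul, mul_one]
  conv_lhs => rw [hexp]
  rw [map_sum]
  simp only [_root_.map_smul, Module.Basis.repr_self]
  rw [Finsupp.coe_finset_sum, Finset.sum_apply]
  simp only [Finsupp.coe_smul, Pi.smul_apply, Finsupp.single_apply, smul_eq_mul]
  rw [Finset.sum_eq_single p]
  · simp
  · intro q _ hq
    rw [if_neg hq, mul_zero]
  · intro h; exact absurd (Finset.mem_univ _) h

lemma gl_trace_ad_ad {n : ℕ} (A B : Matrix (Fin n) (Fin n) ℝ) :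
    LinearMap.trace ℝ (Matrix (Fin n) (Fin n) ℝ)
      ((LieAlgebra.ad ℝ (Matrix (Fin n) (Fin n) ℝ) A) ∘ₗ
        (LieAlgebra.ad ℝ (Matrix (Fin n) (Fin n) ℝ) B))
    = 2 * n * (A * B).trace - 2 * A.trace * B.trace := by
  rw [LinearMap.trace_eq_matrix_trace ℝ (Matrix.stdBasis ℝ (Fin n) (Fin n))]
  rw [Matrix.trace]
  have key : ∀ p : Fin n × Fin n,
      (LinearMap.toMatrix (Matrix.stdBasis ℝ (Fin n) (Fin n)) (Matrix.stdBasis ℝ (Fin n) (Fin n))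
        ((LieAlgebra.ad ℝ _ A) ∘ₗ (LieAlgebra.ad ℝ _ B))) p p
      = (A * B) p.1 p.1 + (B * A) p.2 p.2 - A p.1 p.1 * B p.2 p.2 - B p.1 p.1 * A p.2 p.2 := by
    intro p
    obtain ⟨i, j⟩ := p
    rw [LinearMap.toMatrix_apply, stdBasis_repr, Matrix.stdBasis_eq_single]
    rw [LinearMap.comp_apply]
    simp only [LieAlgebra.ad_apply, Ring.lie_def]
    have hE : A * (B * Matrix.single i j (1:ℝ) - Matrix.single i j 1 * B) -
        (B * Matrix.single i j 1 - Matrix.single i j 1 * B) * A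
        = A * B * Matrix.single i j 1 - (A * Matrix.single i j 1) * B
          - B * (Matrix.single i j 1 * A) + Matrix.single i j 1 * (B * A) := by
      noncomm_ring
    rw [hE]
    simp only [Matrix.sub_apply, Matrix.add_apply]
    have e1 : (A * B * Matrix.single i j (1:ℝ)) i j = (A * B) i i := by
      simp [Matrix.mul_apply, Matrix.single, ite_and]
    have e2 : ((A * Matrix.single i j (1:ℝ)) * B) i j = A i i * B j j := by
      simp [Matrix.mul_apply, Matrix.single, ite_and]
    have e3 : (B * (Matrix.single i j (1:ℝ) * A)) i j = B i i * A j j := by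
      simp [Matrix.mul_apply, Matrix.single, ite_and]
    have e4 : (Matrix.single i j (1:ℝ) * (B * A)) i j = (B * A) j j := by
      simp [Matrix.mul_apply, Matrix.single, ite_and]
    rw [e1, e2, e3, e4]
    ring
  simp only [Matrix.diag_apply]
  rw [Finset.sum_congr rfl (fun p _ => key p)]
  rw [Fintype.sum_prod_type]
  simp only [Finset.sum_sub_distrib, Finset.sum_add_distrib, Finset.sum_const,
    Finset.card_univ, Fintype.card_fin, nsmul_eq_mul, ← Finset.sum_mul, ← Finset.mul_sum]
  have tAB : ∑ i : Fin n, (A * B) i i = (A * B).trace := rfl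
  have tBA : ∑ i : Fin n, (B * A) i i = (B * A).trace := rfl
  have tA : ∑ i : Fin n, A i i = A.trace := rfl
  have tB : ∑ i : Fin n, B i i = B.trace := rfl
  rw [tAB, tBA, tA, tB, Matrix.trace_mul_comm B A]
  ring

lemma mem_slk {k : ℕ} {A : Matrix (Fin (k+1)) (Fin (k+1)) ℝ} :
    A ∈ slk k ↔ A.trace = 0 := Iff.rfl

lemma killing_eq (k : ℕ) (u v : ↥(slk k)) :
    killingForm ℝ ↥(slk k) u v
      = 2 * (k+1) * ((u : Matrix (Fin (k+1)) (Fin (k+1)) ℝ)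
            * (v : Matrix (Fin (k+1)) (Fin (k+1)) ℝ)).trace
        - 2 * (u : Matrix (Fin (k+1)) (Fin (k+1)) ℝ).trace
            * (v : Matrix (Fin (k+1)) (Fin (k+1)) ℝ).trace := by
  rw [killingForm_apply_apply]
  set gl := Matrix (Fin (k+1)) (Fin (k+1)) ℝ
  set F := (LieAlgebra.ad ℝ gl (u : gl)) ∘ₗ (LieAlgebra.ad ℝ gl (v : gl)) with hF
  have hFmem : ∀ M : gl, F M ∈ (slk k).toSubmodule := by
    intro M
    show (F M) ∈ slk k
    rw [mem_slk]
    have : F M = ⁅(u : gl), ⁅(v : gl), M⁆⁆ := rfl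
    rw [this, Ring.lie_def]
    rw [Matrix.trace_sub, Matrix.trace_mul_comm, sub_self]
  set G := F.codRestrict (slk k).toSubmodule hFmem with hG
  have h1 : LinearMap.trace ℝ gl F
      = LinearMap.trace ℝ ↥(slk k) (G ∘ₗ ((slk k).toSubmodule.subtype)) := by
    rw [← LinearMap.subtype_comp_codRestrict F (slk k).toSubmodule hFmem, ← hG]
    rw [LinearMap.trace_comp_comm']
    rfl
  have h2 : G ∘ₗ ((slk k).toSubmodule.subtype)
      = (LieAlgebra.ad ℝ ↥(slk k) u) ∘ₗ (LieAlgebra.ad ℝ ↥(slk k) v) := by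
    refine LinearMap.ext fun w => Subtype.ext ?_
    show F (w : gl) = ((⁅u, ⁅v, w⁆⁆ : ↥(slk k)) : gl)
    rw [LieSubalgebra.coe_bracket, LieSubalgebra.coe_bracket]
    rfl
  rw [← h2, ← h1, hF, gl_trace_ad_ad]
  push_cast
  ring

end Stmt13Aux
open Stmt13Aux in
theorem stmt13 (k : ℕ) (hk : 1 ≤ k)
    -- `x`, `h`, `y` viewed as elements of `sl(k+1, ℝ)`:
    (xe he ye : ↥(slk k))
    (hxe : (xe : Matrix (Fin (k + 1)) (Fin (k + 1)) ℝ) = xMat k)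
    (hhe : (he : Matrix (Fin (k + 1)) (Fin (k + 1)) ℝ) = hMat k)
    (hye : (ye : Matrix (Fin (k + 1)) (Fin (k + 1)) ℝ) = yMat k) :
    -- `W := {u ∈ 𝔰^⊥ ∩ 𝔭 : ⁅u, y⁆ = 0} = span{y², y³, …, y^k}`:
    Submodule.map (slk k).incl.toLinearMap
      (perpOf (killingForm ℝ ↥(slk k)) (Submodule.span ℝ {xe, he, ye}) ⊓
        (⨆ i ≥ (0 : ℤ), slkBand k i) ⊓ kerRight ye) =
    Submodule.span ℝ {A : Matrix (Fin (k + 1)) (Fin (k + 1)) ℝ |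
      ∃ m : ℕ, 2 ≤ m ∧ m ≤ k ∧ A = yMat k ^ m} := by
  apply le_antisymm
  · -- W ⊆ span of powers
    rintro A ⟨u, hu, rfl⟩
    obtain ⟨⟨hperp, -⟩, hker⟩ := hu
    have hincl : (slk k).incl.toLinearMap u = (u : Matrix (Fin (k+1)) (Fin (k+1)) ℝ) := rfl
    rw [hincl]
    -- commutation
    have hker' : ⁅u, ye⁆ = 0 := hker
    have hcomm : (u : Matrix (Fin (k+1)) (Fin (k+1)) ℝ) * yMat k
        = yMat k * (u : Matrix (Fin (k+1)) (Fin (k+1)) ℝ) := by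
      have h0 : ((⁅u, ye⁆ : ↥(slk k)) : Matrix (Fin (k+1)) (Fin (k+1)) ℝ) = 0 := by
        rw [hker']; rfl
      rw [LieSubalgebra.coe_bracket, hye, Ring.lie_def] at h0
      exact sub_eq_zero.mp h0
    set U : Matrix (Fin (k+1)) (Fin (k+1)) ℝ := (u : Matrix (Fin (k+1)) (Fin (k+1)) ℝ) with hU
    set t : Fin (k+1) → ℝ := fun m => U 0 m / pr k (m:ℕ) 0 with ht
    have hrep : U = ∑ m : Fin (k+1), t m • yMat k ^ (m:ℕ) := centralizer_repr U hcomm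
    have htr : U.trace = 0 := u.2
    have hone : ((1 : Fin (k+1)) : ℕ) = 1 := by
      rw [Fin.val_one']; exact Nat.mod_eq_of_lt (by omega)
    -- t 0 = 0
    have ht0 : t 0 = 0 := by
      have e1 : U.trace = t 0 * (k+1) := by
        conv_lhs => rw [hrep]
        rw [Matrix.trace_sum]
        rw [Finset.sum_eq_single (0 : Fin (k+1))]
        · rw [Matrix.trace_smul]
          norm_num [Matrix.trace_one]
        · intro m _ hm
          rw [Matrix.trace_smul, ypow_trace k (m:ℕ), smul_zero]
          have : (m:ℕ) ≠ 0 := fun hv => hm (Fin.ext hv)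
          omega
        · intro h; exact absurd (Finset.mem_univ _) h
      rw [htr] at e1
      have hk1 : ((k:ℝ)+1) ≠ 0 := by positivity
      field_simp at e1
      exact (mul_eq_zero.mp e1.symm).resolve_right hk1
    -- trace (U * x) = 0 from the Killing form condition
    have hkill : killingForm ℝ ↥(slk k) u xe = 0 :=
      hperp xe (Submodule.subset_span (by simp))
    have htrux : (U * xMat k).trace = 0 := by
      have e2 := killing_eq k u xe
      rw [hkill, hxe, htr] at e2
      have hk1 : (2:ℝ) * (k+1) ≠ 0 := by positivity
      have := e2.symm
      rw [mul_zero, zero_mul, sub_zero] at this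
      exact (mul_eq_zero.mp this).resolve_left hk1
    -- t 1 = 0
    have ht1 : t 1 = 0 := by
      have e3 : (U * xMat k).trace = t 1 * (yMat k * xMat k).trace := by
        conv_lhs => rw [hrep]
        rw [Finset.sum_mul, Matrix.trace_sum]
        rw [Finset.sum_eq_single (1 : Fin (k+1))]
        · rw [smul_mul_assoc, Matrix.trace_smul, hone, pow_one, smul_eq_mul]
        · intro m _ hm
          rw [smul_mul_assoc, Matrix.trace_smul, trace_ypow_mul_x k (m:ℕ), smul_zero]
          intro hv
          exact hm (Fin.ext (by rw [hv, hone]))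
        · intro h; exact absurd (Finset.mem_univ _) h
      rw [htrux] at e3
      have := e3.symm
      exact (mul_eq_zero.mp this).resolve_right (ne_of_gt (trace_y_mul_x_pos k hk))
    -- conclude
    rw [hrep]
    apply Submodule.sum_mem
    intro m _
    by_cases hm0 : (m:ℕ) = 0
    · have : m = 0 := Fin.ext hm0
      rw [this, ht0, zero_smul]
      exact Submodule.zero_mem _
    by_cases hm1 : (m:ℕ) = 1
    · have : m = 1 := Fin.ext (by rw [hm1, hone])
      rw [this, ht1, zero_smul]
      exact Submodule.zero_mem _
    apply Submodule.smul_mem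
    apply Submodule.subset_span
    exact ⟨(m:ℕ), by omega, by omega, rfl⟩
  · -- span of powers ⊆ W
    rw [Submodule.span_le]
    rintro A ⟨m, hm2, hmk, rfl⟩
    have htrm : (yMat k ^ m).trace = 0 := ypow_trace k m (by omega)
    set um : ↥(slk k) := ⟨yMat k ^ m, htrm⟩ with hum
    have humc : (um : Matrix (Fin (k+1)) (Fin (k+1)) ℝ) = yMat k ^ m := rfl
    refine ⟨um, ⟨⟨?_, ?_⟩, ?_⟩, rfl⟩
    · -- perp condition
      intro s hs
      induction hs using Submodule.span_induction with
      | mem s hsmem =>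
        have hb : s = xe ∨ s = he ∨ s = ye := by
          simpa [Set.mem_insert_iff] using hsmem
        rcases hb with rfl | rfl | rfl
        · rw [killing_eq, humc, hxe, htrm, trace_ypow_mul_x k m (by omega)]
          ring
        · rw [killing_eq, humc, hhe, htrm, trace_ypow_mul_h k m (by omega)]
          ring
        · rw [killing_eq, humc, hye, htrm, ← pow_succ, ypow_trace k (m+1) (by omega)]
          ring
      | zero => simp
      | add a b ha hb iha ihb => rw [map_add, iha, ihb, add_zero]
      | smul c a ha iha => rw [map_smul, smul_eq_mul, iha, mul_zero]
    · -- upper-triangular condition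
      apply Submodule.mem_iSup_of_mem (m : ℤ)
      apply Submodule.mem_iSup_of_mem (by positivity : (0:ℤ) ≤ (m:ℤ))
      show ((slk k).incl.toLinearMap um) ∈ band (k+1) m
      intro a b hab
      have hv : ((slk k).incl.toLinearMap um) a b = (yMat k ^ m) a b := rfl
      rw [hv, ypow_apply, if_neg (by omega)]
    · -- commutation with y
      show ⁅um, ye⁆ = 0
      apply Subtype.ext
      rw [LieSubalgebra.coe_bracket, humc, hye, Ring.lie_def, ← pow_succ, ← pow_succ']
      exact sub_self _
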